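/- Let f : ℝ → ℝ≥0 be a log-concave probability density with mean μ. Then f(μ) ≥ (1/8) · sup_x f(x). -/

import Mathlib

open MeasureTheory Set

-- Exponential first-moment integral on a left half-line.
lemma expMoment (c b d : ℝ) (hc : 0 < c) :
    IntegrableOn (fun x => (b - x) * Real.exp (-c * (d - x))) (Iic b) volume ∧
    ∫ x in Iic b, (b - x) * Real.exp (-c * (d - x)) = Real.exp (-c * (d - b)) / c ^ 2 := by
  have hmp : MeasurePreserving (fun x : ℝ => b + -x) volume volume :=
    (measurePreserving_add_left volume b).comp (Measure.measurePreserving_neg volume)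
  have hemb : MeasurableEmbedding (fun x : ℝ => b + -x) :=
    ((Homeomorph.neg ℝ).trans (Homeomorph.addLeft b)).measurableEmbedding
  have hpre : (fun x : ℝ => b + -x) ⁻¹' (Ici 0) = Iic b := by
    ext x
    simp only [mem_preimage, mem_Ici, mem_Iic]
    constructor <;> intro h <;> linarith
  have hIci : IntegrableOn (fun t : ℝ => t * Real.exp (-c * t)) (Ici 0) := by
    rw [integrableOn_Ici_iff_integrableOn_Ioi]
    have h := integrableOn_rpow_mul_exp_neg_mul_rpow (p := 1) (s := 1)
      (by norm_num) zero_lt_one hc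
    refine h.congr_fun (fun x hx => ?_) measurableSet_Ioi
    simp [Real.rpow_one]
  have hval : ∫ t in Ioi (0:ℝ), t * Real.exp (-c * t) = 1 / c ^ 2 := by
    have h := Real.integral_rpow_mul_exp_neg_mul_Ioi (a := 2) (r := c) (by norm_num) hc
    rw [Real.Gamma_two, mul_one] at h
    have h2 : ∫ t in Ioi (0:ℝ), t ^ ((2:ℝ) - 1) * Real.exp (-(c * t))
        = ∫ t in Ioi (0:ℝ), t * Real.exp (-c * t) := by
      refine setIntegral_congr_fun measurableSet_Ioi (fun x hx => ?_)
      norm_num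
    rw [h2] at h
    rw [h]
    rw [show ((2:ℝ)) = ((2:ℕ):ℝ) by norm_num, Real.rpow_natCast]
    rw [div_pow]
    norm_num
  have hcomp : ∀ x : ℝ, (b - x) * Real.exp (-c * (d - x))
      = Real.exp (-c * (d - b)) * ((b + -x) * Real.exp (-c * (b + -x))) := by
    intro x
    rw [show (-c * (d - x)) = (-c * (d - b)) + (-c * (b + -x)) by ring, Real.exp_add]
    ring
  have hIicInt : IntegrableOn
      (fun x => ((fun t : ℝ => t * Real.exp (-c * t)) ∘ (fun x : ℝ => b + -x)) x) (Iic b) := by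
    rw [← hpre]
    exact (hmp.integrableOn_comp_preimage hemb).mpr hIci
  constructor
  · have h2 : IntegrableOn
        (fun x => Real.exp (-c * (d - b)) *
          ((fun t : ℝ => t * Real.exp (-c * t)) ∘ (fun x : ℝ => b + -x)) x) (Iic b) :=
      hIicInt.const_mul _
    refine IntegrableOn.congr_fun h2 (fun x _ => ?_) measurableSet_Iic
    exact (hcomp x).symm
  · calc ∫ x in Iic b, (b - x) * Real.exp (-c * (d - x))
        = ∫ x in Iic b, Real.exp (-c * (d - b)) * ((b + -x) * Real.exp (-c * (b + -x))) := by
          exact setIntegral_congr_fun measurableSet_Iic (fun x _ => hcomp x)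
      _ = Real.exp (-c * (d - b)) * ∫ x in Iic b, (b + -x) * Real.exp (-c * (b + -x)) := by
          exact integral_const_mul _ _
      _ = Real.exp (-c * (d - b)) * ∫ t in Ici (0:ℝ), t * Real.exp (-c * t) := by
          congr 1
          rw [← hpre]
          exact hmp.setIntegral_preimage_emb hemb (fun t => t * Real.exp (-c * t)) (Ici 0)
      _ = Real.exp (-c * (d - b)) / c ^ 2 := by
          rw [integral_Ici_eq_integral_Ioi, hval]
          ring

set_option maxHeartbeats 1000000 in
lemma core (f : ℝ → ℝ) (hf0 : ∀ x, 0 ≤ f x)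
    (hlc : ∀ x y (l : ℝ), 0 ≤ l → l ≤ 1 →
      f (l * x + (1 - l) * y) ≥ f x ^ l * f y ^ (1 - l))
    (hint : ∫ x, f x = 1) (hInt : Integrable f)
    (μ : ℝ) (hmeanInt : Integrable (fun x => x * f x)) (hmean : ∫ x, x * f x = μ)
    (x0 : ℝ) (hx0 : μ < x0) (h7 : 7 * f μ < f x0) : False := by
  set p := f μ with hp
  set q := f x0 with hq
  have hp0 : 0 ≤ p := hf0 μ
  have hq0 : 0 < q := lt_of_le_of_lt (by linarith) h7
  set a := x0 - μ with ha
  have ha0 : 0 < a := by simp only [ha]; linarith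
  -- Step A : exponential decay to the left of μ
  have hbound : ∀ x, x ≤ μ → f x ≤ q * (p / q) ^ ((x0 - x) / a) := by
    intro x hx
    rcases hx.eq_or_lt with rfl | hx
    · have : (x0 - x) / a = 1 := by
        rw [ha, div_self]; linarith
      rw [this, Real.rpow_one, mul_div_cancel₀ _ hq0.ne']
    · set l := a / (x0 - x) with hl
      have hxx : 0 < x0 - x := by linarith
      have hl0 : 0 < l := div_pos ha0 hxx
      have hl1 : l < 1 := (div_lt_one hxx).mpr (by simp only [ha]; linarith)
      have key := hlc x x0 l hl0.le hl1.le
      have harg : l * x + (1 - l) * x0 = μ := by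
        rw [hl, ha]; field_simp; ring
      rw [harg] at key
      have h2 : f x ^ l ≤ p / q ^ (1 - l) := by
        rw [le_div_iff₀ (Real.rpow_pos_of_pos hq0 _)]
        exact key
      have h3 : f x = (f x ^ l) ^ (1 / l) := by
        rw [← Real.rpow_mul (hf0 x), mul_one_div, div_self hl0.ne', Real.rpow_one]
      have h4 : (1:ℝ) / l = (x0 - x) / a := by
        rw [hl, one_div_div]
      rw [h3, h4]
      have h5 : (f x ^ l) ^ ((x0 - x)/a) ≤ (p / q ^ (1 - l)) ^ ((x0 - x)/a) :=
        Real.rpow_le_rpow (Real.rpow_nonneg (hf0 x) _) h2 (by positivity)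
      refine h5.trans (le_of_eq ?_)
      rw [Real.div_rpow hp0 (Real.rpow_nonneg hq0.le _), Real.div_rpow hp0 hq0.le,
        ← Real.rpow_mul hq0.le]
      have hle : l * ((x0 - x)/a) = 1 := by rw [hl]; field_simp
      have h6 : (1 - l) * ((x0 - x)/a) = (x0 - x)/a - 1 := by
        rw [sub_mul, one_mul, hle]
      rw [h6, Real.rpow_sub hq0, Real.rpow_one]
      have hqe : q ^ ((x0 - x)/a) ≠ 0 := (Real.rpow_pos_of_pos hq0 _).ne'
      field_simp
  -- supporting integrability facts
  have hsubInt : Integrable (fun x => (x - μ) * f x) := by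
    have heq : (fun x => (x - μ) * f x) = fun x => x * f x - μ * f x :=
      funext fun x => by ring
    rw [heq]; exact hmeanInt.sub (hInt.const_mul μ)
  have hnegInt : Integrable (fun x => (μ - x) * f x) := by
    have heq : (fun x => (μ - x) * f x) = fun x => -((x - μ) * f x) :=
      funext fun x => by ring
    rw [heq]; exact hsubInt.neg
  have htot : ∫ x, (x - μ) * f x = 0 := by
    have heq : (fun x => (x - μ) * f x) = fun x => x * f x - μ * f x :=
      funext fun x => by ring
    rw [heq, integral_sub hmeanInt (hInt.const_mul μ), hmean, integral_const_mul, hint]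
    ring
  have hsplit : (∫ x in Iic μ, (x - μ) * f x) + (∫ x in Ioi μ, (x - μ) * f x) = 0 := by
    rw [intervalIntegral.integral_Iic_add_Ioi hsubInt.integrableOn hsubInt.integrableOn, htot]
  have hRL : ∫ x in Ici μ, (x - μ) * f x = ∫ x in Iic μ, (μ - x) * f x := by
    rw [integral_Ici_eq_integral_Ioi]
    have hneg : ∫ x in Iic μ, (μ - x) * f x = - ∫ x in Iic μ, (x - μ) * f x := by
      rw [← integral_neg]
      refine setIntegral_congr_fun measurableSet_Iic (fun x _ => ?_)
      ring
    rw [hneg]; linarith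
  -- case p = 0
  rcases hp0.eq_or_lt with hp0' | hppos
  · have hzero : ∀ x ∈ Iic μ, f x = 0 := by
      intro x hx
      rcases (mem_Iic.mp hx).eq_or_lt with rfl | hlt
      · exact hp0'.symm
      · have hb := hbound x (mem_Iic.mp hx)
        have hen : (0:ℝ) < (x0 - x)/a := div_pos (by linarith) ha0
        rw [← hp0', zero_div, Real.zero_rpow hen.ne'] at hb
        have := hf0 x
        linarith [hb]
    have hIic1 : ∫ x in Iic μ, f x = 0 := by
      have h0 : ∫ x in Iic μ, f x = ∫ _x in Iic μ, (0:ℝ) :=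
        setIntegral_congr_fun measurableSet_Iic (fun x hx => hzero x hx)
      simpa using h0
    have hIic2 : ∫ x in Iic μ, (x - μ) * f x = 0 := by
      have h0 : ∫ x in Iic μ, (x - μ) * f x = ∫ _x in Iic μ, (0:ℝ) :=
        setIntegral_congr_fun measurableSet_Iic (fun x hx => by rw [hzero x hx, mul_zero])
      simpa using h0
    have hIoi : ∫ x in Ioi μ, (x - μ) * f x = 0 := by linarith
    have hae : (fun x => (x - μ) * f x) =ᵐ[volume.restrict (Ioi μ)] 0 := by
      rw [← setIntegral_eq_zero_iff_of_nonneg_ae ?_ hsubInt.integrableOn]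
      · exact hIoi
      · filter_upwards [ae_restrict_mem measurableSet_Ioi] with x hx
        exact mul_nonneg (by simp only [mem_Ioi] at hx; linarith) (hf0 x)
    have hfae : f =ᵐ[volume.restrict (Ioi μ)] 0 := by
      filter_upwards [hae, ae_restrict_mem measurableSet_Ioi] with x hx1 hx2
      simp only [mem_Ioi] at hx2
      have hxne : x - μ ≠ 0 := by linarith
      have := mul_eq_zero.mp hx1
      tauto
    have hIoi0 : ∫ x in Ioi μ, f x = 0 := by
      rw [integral_congr_ae hfae]; simp
    have := intervalIntegral.integral_Iic_add_Ioi (b := μ) hInt.integrableOn hInt.integrableOn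
    rw [hIic1, hIoi0, hint] at this
    norm_num at this
  -- main case p > 0
  · set r := p / q with hr
    have hrpos : 0 < r := div_pos hppos hq0
    have hr7 : 7 < q / p := (lt_div_iff₀ hppos).mpr (by linarith)
    set c := Real.log (q / p) / a with hc
    have hlogpos : 0 < Real.log (q / p) := Real.log_pos (by linarith)
    have hcpos : 0 < c := div_pos hlogpos ha0
    -- exponential bound in exp form
    have hboundexp : ∀ x ∈ Iic μ, f x ≤ q * Real.exp (-c * (x0 - x)) := by
      intro x hx
      refine (hbound x (mem_Iic.mp hx)).trans (le_of_eq ?_)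
      congr 1
      rw [Real.rpow_def_of_pos hrpos]
      congr 1
      have hlr : Real.log r = - Real.log (q / p) := by
        rw [hr, ← Real.log_inv, inv_div]
      rw [hlr, hc]
      field_simp
    have hexp := expMoment c μ x0 hcpos
    -- left integral upper bound
    have hLbound : ∫ x in Iic μ, (μ - x) * f x ≤ q * (Real.exp (-c * (x0 - μ)) / c ^ 2) := by
      have hmulInt : IntegrableOn (fun x => (μ - x) * (q * Real.exp (-c * (x0 - x)))) (Iic μ) := by
        have h2 : IntegrableOn (fun x => q * ((μ - x) * Real.exp (-c * (x0 - x)))) (Iic μ) :=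
          hexp.1.const_mul q
        refine IntegrableOn.congr_fun h2 (fun x _ => ?_) measurableSet_Iic
        ring
      have hle : ∫ x in Iic μ, (μ - x) * f x
          ≤ ∫ x in Iic μ, (μ - x) * (q * Real.exp (-c * (x0 - x))) := by
        refine setIntegral_mono_on hnegInt.integrableOn hmulInt measurableSet_Iic
          (fun x hx => ?_)
        exact mul_le_mul_of_nonneg_left (hboundexp x hx)
          (by simp only [mem_Iic] at hx; linarith)
      refine hle.trans (le_of_eq ?_)
      have heq2 : ∫ x in Iic μ, (μ - x) * (q * Real.exp (-c * (x0 - x)))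
          = q * ∫ x in Iic μ, (μ - x) * Real.exp (-c * (x0 - x)) := by
        rw [← integral_const_mul]
        exact setIntegral_congr_fun measurableSet_Iic (fun x _ => by ring)
      rw [heq2, hexp.2]
  -- lower bound for f on [μ, x0]
    have hflow : ∀ x ∈ Icc μ x0, p ≤ f x := by
      intro x hx
      obtain ⟨hx1, hx2⟩ := hx
      set s := (x - μ) / a with hs
      have hs0 : 0 ≤ s := div_nonneg (by linarith) ha0.le
      have hs1 : s ≤ 1 := (div_le_one ha0).mpr (by simp only [ha]; linarith)
      have key := hlc x0 μ s hs0 hs1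
      have harg : s * x0 + (1 - s) * μ = x := by
        rw [hs]; rw [show (x - μ) / a * x0 + (1 - (x - μ) / a) * μ = (x - μ) / a * a + μ by rw [ha]; ring, div_mul_cancel₀ _ ha0.ne']; ring
      rw [harg] at key
      have hpq : p ≤ q := by linarith
      have h1 : p ^ s * p ^ (1 - s) ≤ q ^ s * p ^ (1 - s) :=
        mul_le_mul_of_nonneg_right (Real.rpow_le_rpow hp0 hpq hs0)
          (Real.rpow_nonneg hp0 _)
      have h2 : p ^ s * p ^ (1 - s) = p := by
        rw [← Real.rpow_add hppos]; norm_num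
      linarith [key]
    -- right integral lower bound
    have hconst : ∫ x in Icc μ x0, (x - μ) * p = p * (a ^ 2 / 2) := by
      rw [integral_Icc_eq_integral_Ioc, ← intervalIntegral.integral_of_le hx0.le]
      rw [show (fun x => (x - μ) * p) = fun x => ((fun u => u * p) (x - μ)) from rfl]
      rw [intervalIntegral.integral_comp_sub_right (fun u => u * p) μ]
      rw [intervalIntegral.integral_mul_const, integral_id]
      rw [ha]; ring_nf
    have hR1 : p * (a ^ 2 / 2) ≤ ∫ x in Icc μ x0, (x - μ) * f x := by
      rw [← hconst]
      refine setIntegral_mono_on ?_ hsubInt.integrableOn measurableSet_Icc (fun x hx => ?_)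
      · exact ((continuous_id.sub continuous_const).mul continuous_const).integrableOn_Icc
      · exact mul_le_mul_of_nonneg_left (hflow x hx) (by linarith [hx.1])
    have hR2 : ∫ x in Icc μ x0, (x - μ) * f x ≤ ∫ x in Ici μ, (x - μ) * f x := by
      refine setIntegral_mono_set hsubInt.integrableOn ?_ Icc_subset_Ici_self.eventuallyLE
      filter_upwards [ae_restrict_mem measurableSet_Ici] with x hx
      exact mul_nonneg (by simp only [mem_Ici] at hx; linarith) (hf0 x)
    -- combine
    have hexpval : Real.exp (-c * (x0 - μ)) = r := by
      have h1 : -c * (x0 - μ) = Real.log (p / q) := by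
        rw [hc, show Real.log (p/q) = - Real.log (q/p) by rw [← Real.log_inv, inv_div]]
        field_simp
        rw [ha]
      rw [h1, Real.exp_log (div_pos hppos hq0), hr]
    have hchain : p * (a ^ 2 / 2) ≤ q * (r / c ^ 2) := by
      calc p * (a ^ 2 / 2) ≤ ∫ x in Icc μ x0, (x - μ) * f x := hR1
        _ ≤ ∫ x in Ici μ, (x - μ) * f x := hR2
        _ = ∫ x in Iic μ, (μ - x) * f x := hRL
        _ ≤ q * (Real.exp (-c * (x0 - μ)) / c ^ 2) := hLbound
        _ = q * (r / c ^ 2) := by rw [hexpval]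
    have hqr : q * (r / c ^ 2) = p / c ^ 2 := by
      rw [hr]; field_simp
    rw [hqr] at hchain
    -- so a^2/2 ≤ 1/c^2, i.e. (log (q/p))^2 ≤ 2
    have hsmall : Real.log (q / p) ^ 2 ≤ 2 := by
      have hc2 : (c:ℝ) ^ 2 ≠ 0 := by positivity
      have hchain' : p * (a ^ 2 / 2) * c ^ 2 ≤ p := by
        have := mul_le_mul_of_nonneg_right hchain (sq_nonneg c)
        rwa [div_mul_cancel₀ _ hc2] at this
      have h2 : c ^ 2 * a ^ 2 ≤ 2 := by
        have h4 : p * (a ^ 2 / 2 * c ^ 2) ≤ p * 1 := by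
          calc p * (a ^ 2 / 2 * c ^ 2) = p * (a ^ 2 / 2) * c ^ 2 := by ring
            _ ≤ p := hchain'
            _ = p * 1 := by ring
        have h5 := le_of_mul_le_mul_left h4 hppos
        calc c ^ 2 * a ^ 2 = 2 * (a ^ 2 / 2 * c ^ 2) := by ring
          _ ≤ 2 * 1 := mul_le_mul_of_nonneg_left h5 (by norm_num)
          _ = 2 := by ring
      have h3 : c * a = Real.log (q / p) := by
        rw [hc, div_mul_cancel₀ _ ha0.ne']
      calc Real.log (q/p) ^ 2 = c ^ 2 * a ^ 2 := by rw [← h3]; ring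
        _ ≤ 2 := h2
    -- but log (q/p) > 3/2
    have hbig : (3:ℝ) / 2 < Real.log (q / p) := by
      have hexp3 : Real.exp (3/2 : ℝ) < 7 := by
        have he3 : Real.exp (3:ℝ) = Real.exp 1 ^ (3:ℕ) := by
          rw [← Real.exp_nat_mul]; norm_num
        have hsq : Real.exp (3/2 : ℝ) ^ 2 = Real.exp 3 := by
          rw [sq, ← Real.exp_add]; norm_num
        have hlt : Real.exp 1 ^ (3:ℕ) < (2.7182818286 : ℝ) ^ (3:ℕ) :=
          pow_lt_pow_left₀ Real.exp_one_lt_d9 (Real.exp_pos 1).le (by norm_num)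
        have h49 : Real.exp (3/2 : ℝ) ^ 2 < 7 ^ 2 := by
          rw [hsq, he3]; nlinarith
        exact lt_of_pow_lt_pow_left₀ 2 (by norm_num) h49
      rw [Real.lt_log_iff_exp_lt (div_pos hq0 hppos)]
      linarith [hexp3, hr7]
    have hfin := pow_lt_pow_left₀ hbig (by norm_num : (0:ℝ) ≤ 3/2) (by norm_num : (2:ℕ) ≠ 0)
    norm_num at hfin
    linarith

theorem stmt4 (f : ℝ → ℝ) (hf0 : ∀ x, 0 ≤ f x)
    (hlc : ∀ x y (l : ℝ), 0 ≤ l → l ≤ 1 →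
      f (l * x + (1 - l) * y) ≥ f x ^ l * f y ^ (1 - l))
    (hint : ∫ x, f x = 1) (hInt : Integrable f)
    (μ : ℝ) (hmeanInt : Integrable (fun x => x * f x)) (hmean : ∫ x, x * f x = μ) :
    f μ ≥ (1 / 8) * ⨆ x, f x := by
  by_contra hcon
  push_neg at hcon
  have hbdd : BddAbove (range f) := by
    by_contra hb
    rw [Real.iSup_of_not_bddAbove hb] at hcon
    have := hf0 μ; linarith
  have hS0 : 0 < ⨆ x, f x := by have := hf0 μ; linarith
  obtain ⟨x0, hx0⟩ :=
    exists_lt_of_lt_ciSup (show (7/8) * (⨆ x, f x) < ⨆ x, f x by linarith)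
  have h7 : 7 * f μ < f x0 := by linarith
  rcases lt_trichotomy μ x0 with hlt | heq | hgt
  · exact core f hf0 hlc hint hInt μ hmeanInt hmean x0 hlt h7
  · rw [← heq] at h7
    have := hf0 μ
    linarith
  · -- reflect f about μ
    set g : ℝ → ℝ := fun x => f (2*μ - x) with hg
    have hmp : MeasurePreserving (fun x : ℝ => 2*μ + -x) volume volume :=
      (measurePreserving_add_left volume (2*μ)).comp (Measure.measurePreserving_neg volume)
    have hemb : MeasurableEmbedding (fun x : ℝ => 2*μ + -x) :=
      ((Homeomorph.neg ℝ).trans (Homeomorph.addLeft (2*μ))).measurableEmbedding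
    have hgf : ∀ x, g x = f (2*μ + -x) := fun x => congrArg f (by ring)
    have hg0 : ∀ x, 0 ≤ g x := fun x => hf0 _
    have hglc : ∀ x y (l : ℝ), 0 ≤ l → l ≤ 1 →
        g (l * x + (1 - l) * y) ≥ g x ^ l * g y ^ (1 - l) := by
      intro x y l h0 h1
      have harg : 2*μ - (l*x + (1-l)*y) = l*(2*μ-x) + (1-l)*(2*μ-y) := by ring
      show f (2*μ - (l*x + (1-l)*y)) ≥ f (2*μ - x) ^ l * f (2*μ - y) ^ (1-l)
      rw [harg]
      exact hlc _ _ l h0 h1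
    have hgint : ∫ x, g x = 1 := by
      calc ∫ x, g x = ∫ x, f (2*μ + -x) := integral_congr_ae (ae_of_all _ hgf)
        _ = ∫ y, f y := hmp.integral_comp hemb f
        _ = 1 := hint
    have hgInt : Integrable g := by
      refine ((hmp.integrable_comp_emb hemb).mpr hInt).congr ?_
      exact ae_of_all _ fun x => (hgf x).symm
    have hGaux : Integrable (fun y => (2*μ - y) * f y) := by
      have heq : (fun y => (2*μ - y) * f y) = fun y => (2*μ) * f y - y * f y :=
        funext fun y => by ring
      rw [heq]; exact (hInt.const_mul _).sub hmeanInt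
    have hcompG : ∀ x : ℝ, (2*μ - (2*μ + -x)) * f (2*μ + -x) = x * g x := by
      intro x
      rw [hgf x]
      ring_nf
    have hGInt : Integrable (fun x => x * g x) := by
      exact ((hmp.integrable_comp_emb hemb).mpr hGaux).congr (ae_of_all _ fun x => hcompG x)
    have hgmean : ∫ x, x * g x = μ := by
      calc ∫ x, x * g x
          = ∫ x, (2*μ - (2*μ + -x)) * f (2*μ + -x) :=
            integral_congr_ae (ae_of_all _ fun x => (hcompG x).symm)
        _ = ∫ y, (2*μ - y) * f y := hmp.integral_comp hemb (fun y => (2*μ - y) * f y)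
        _ = (2*μ) * (∫ y, f y) - ∫ y, y * f y := by
            have heq : (fun y => (2*μ - y) * f y) = fun y => (2*μ) * f y - y * f y :=
              funext fun y => by ring
            rw [heq, integral_sub (hInt.const_mul _) hmeanInt, integral_const_mul]
        _ = μ := by rw [hint, hmean]; ring
    have hx0' : μ < 2*μ - x0 := by linarith
    have h7' : 7 * g μ < g (2*μ - x0) := by
      have h1 : g μ = f μ := congrArg f (by ring)
      have h2 : g (2*μ - x0) = f x0 := congrArg f (by ring)
      rw [h1, h2]; exact h7
    exact core g hg0 hglc hgint hgInt μ hGInt hgmean (2*μ - x0) hx0' h7'
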